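/- arXiv:2202.03060 — 2 statements merged into one kernel-verified Lean document; each statement's English description precedes it below -/
import Mathlib

section
/- For every controlled Markov process, the set of stationary state distributions induced by non-Markovian policies equals the set induced by Markovian policies: a probability distribution d on S satisfies d_t^π(s) → d(s) as t → ∞ (pointwise in s) for some non-Markovian policy π if and only if it satisfies this for some Markovian policy. -/
open scoped BigOperators

/-- A controlled Markov process over finite state space `S` and action space `A`:
a transition kernel `P` and an initial distribution `μ`. -/
structure CMP (S A : Type) [Fintype S] [Fintype A] where
  P : S → A → S → ℝ
  P_nonneg : ∀ s a s', 0 ≤ P s a s'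
  P_sum_one : ∀ s a, ∑ s', P s a s' = 1
  μ : S → ℝ
  μ_nonneg : ∀ s, 0 ≤ μ s
  μ_sum_one : ∑ s, μ s = 1

/-- A history of `t` steps: states `s_0, …, s_t` and actions `a_0, …, a_{t-1}`. -/
abbrev Hist (S A : Type) (t : ℕ) : Type := (Fin (t + 1) → S) × (Fin t → A)

/-- A continuation of `k` further steps: actions `a_0, …, a_{k-1}` together with the
states those actions lead to. -/
abbrev Contin (S A : Type) (k : ℕ) : Type := (Fin k → A) × (Fin k → S)

/-- A general (possibly non-Markovian, possibly randomized) policy: for every time `t`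
and history of length `t`, a probability distribution over actions. -/
structure Policy (S A : Type) [Fintype A] where
  p : ∀ t : ℕ, Hist S A t → A → ℝ
  nonneg : ∀ t h a, 0 ≤ p t h a
  sum_one : ∀ t h, ∑ a, p t h a = 1

/-- A Markovian (randomized, time-dependent) policy: for every time `t` and current
state `s`, a probability distribution over actions. -/
structure MPolicy (S A : Type) [Fintype A] where
  p : ℕ → S → A → ℝ
  nonneg : ∀ t s a, 0 ≤ p t s a
  sum_one : ∀ t s, ∑ a, p t s a = 1

/-- The last (current) state of a history. -/
def lastState {S A : Type} {t : ℕ} (h : Hist S A t) : S := h.1 (Fin.last t)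

/-- A Markovian policy viewed as a general policy. -/
def MPolicy.toPolicy {S A : Type} [Fintype A] (m : MPolicy S A) : Policy S A where
  p := fun t h a => m.p t (lastState h) a
  nonneg := fun t h a => m.nonneg t _ a
  sum_one := fun t h => m.sum_one t _

/-- The general policy induced by a deterministic non-Markovian policy
(a function from histories to actions). -/
def detPolicy {S A : Type} [Fintype A] [DecidableEq A] (f : ∀ t : ℕ, Hist S A t → A) :
    Policy S A where
  p := fun t h a => if a = f t h then 1 else 0
  nonneg := by intro t h a; split <;> norm_num
  sum_one := by intro t h; simp

/-- The length-`i` prefix of a history. -/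
def histTake {S A : Type} {t : ℕ} (h : Hist S A t) (i : ℕ) (hi : i ≤ t) : Hist S A i :=
  (fun j => h.1 ⟨(j : ℕ), by have := j.isLt; omega⟩,
   fun j => h.2 ⟨(j : ℕ), by have := j.isLt; omega⟩)

/-- The probability that policy `π` generates the history `h` when interacting with
the CMP `M` (initial state from `μ`, actions from `π`, transitions from `P`). -/
noncomputable def histProb {S A : Type} [Fintype S] [Fintype A]
    (M : CMP S A) (π : Policy S A) {t : ℕ} (h : Hist S A t) : ℝ :=
  M.μ (h.1 0) * ∏ i : Fin t,
    (π.p i (histTake h i (Nat.le_of_lt i.isLt)) (h.2 i) *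
      M.P (h.1 i.castSucc) (h.2 i) (h.1 i.succ))

/-- The `t`-step state distribution `d_t^π(s) = Pr(s_t = s)`. -/
noncomputable def stateDist {S A : Type} [Fintype S] [Fintype A] [DecidableEq S]
    (M : CMP S A) (π : Policy S A) (t : ℕ) (s : S) : ℝ :=
  ∑ h : Hist S A t, if lastState h = s then histProb M π h else 0

/-- Shannon entropy of a distribution on a finite set (`0 log 0 = 0` since `Real.log 0 = 0`). -/
noncomputable def entropy {S : Type} [Fintype S] (d : S → ℝ) : ℝ :=
  -∑ s, d s * Real.log (d s)

/-- The state visitation frequency of a trajectory with `n+1` states. -/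
noncomputable def visitFreq {S A : Type} [Fintype S] [DecidableEq S] {n : ℕ}
    (h : Hist S A n) (s : S) : ℝ :=
  (∑ i : Fin (n + 1), if h.1 i = s then (1 : ℝ) else 0) / ((n : ℝ) + 1)

/-- The marginal state distribution `d_T^π(s) = (1/T) ∑_{t<T} d_t^π(s)`. -/
noncomputable def marginalDist {S A : Type} [Fintype S] [Fintype A] [DecidableEq S]
    (M : CMP S A) (π : Policy S A) (T : ℕ) (s : S) : ℝ :=
  (1 / (T : ℝ)) * ∑ t ∈ Finset.range T, stateDist M π t s

/-- The `γ`-discounted state distribution `d_γ^π(s) = (1-γ) ∑_t γ^t d_t^π(s)`. -/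
noncomputable def discountedDist {S A : Type} [Fintype S] [Fintype A] [DecidableEq S]
    (M : CMP S A) (π : Policy S A) (γ : ℝ) (s : S) : ℝ :=
  (1 - γ) * ∑' t : ℕ, γ ^ t * stateDist M π t s

/-- Concatenation of a length-`t` history with a `k`-step continuation. -/
def histAppend {S A : Type} {t k : ℕ} (h : Hist S A t) (c : Contin S A k) : Hist S A (t + k) :=
  (fun j => if hj : (j : ℕ) ≤ t then h.1 ⟨(j : ℕ), by omega⟩
            else c.2 ⟨(j : ℕ) - t - 1, by have := j.isLt; omega⟩,
   fun j => if hj : (j : ℕ) < t then h.2 ⟨(j : ℕ), hj⟩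
            else c.1 ⟨(j : ℕ) - t, by have := j.isLt; omega⟩)

/-- The probability that, after the prefix history `h`, running `π` (conditioned on the
full history) produces the `k`-step continuation `c`. -/
noncomputable def contProb {S A : Type} [Fintype S] [Fintype A]
    (M : CMP S A) (π : Policy S A) {t k : ℕ} (h : Hist S A t) (c : Contin S A k) : ℝ :=
  ∏ i : Fin k,
    (π.p (t + (i : ℕ))
        (histTake (histAppend h c) (t + (i : ℕ)) (by have := i.isLt; omega))
        ((histAppend h c).2 ⟨t + (i : ℕ), by have := i.isLt; omega⟩) *
      M.P ((histAppend h c).1 ⟨t + (i : ℕ), by have := i.isLt; omega⟩)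
        ((histAppend h c).2 ⟨t + (i : ℕ), by have := i.isLt; omega⟩)
        ((histAppend h c).1 ⟨t + (i : ℕ) + 1, by have := i.isLt; omega⟩))

/-- The expected entropy of the state visitation frequency of the completed trajectory,
when running `π` for `k` further steps after the prefix history `h`. -/
noncomputable def expEntFrom {S A : Type} [Fintype S] [Fintype A] [DecidableEq S]
    (M : CMP S A) (π : Policy S A) {t : ℕ} (k : ℕ) (h : Hist S A t) : ℝ :=
  ∑ c : Contin S A k, contProb M π h c * entropy (visitFreq (histAppend h c))

/-- A history has positive probability (under some policy) iff its initial state and all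
its transitions have positive probability. -/
def Reachable {S A : Type} [Fintype S] [Fintype A] (M : CMP S A) {t : ℕ}
    (h : Hist S A t) : Prop :=
  0 < M.μ (h.1 0) ∧ ∀ i : Fin t, 0 < M.P (h.1 i.castSucc) (h.2 i) (h.1 i.succ)

section Aux

variable {S A : Type} [Fintype S] [Fintype A] [DecidableEq S]

/-- Extend a history by one action and one state. -/
def extendHist {t : ℕ} (h : Hist S A t) (a : A) (s : S) : Hist S A (t + 1) :=
  (Fin.snoc h.1 s, Fin.snoc h.2 a)

lemma lastState_extend {t : ℕ} (h : Hist S A t) (a : A) (s : S) :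
    lastState (extendHist h a s) = s := by
  simp [lastState, extendHist]

/-- Histories of length `t+1` are extensions of histories of length `t`. -/
def extendEquiv (S A : Type) (t : ℕ) : Hist S A t × A × S ≃ Hist S A (t + 1) where
  toFun x := extendHist x.1 x.2.1 x.2.2
  invFun h := ((Fin.init h.1, Fin.init h.2), h.2 (Fin.last t), h.1 (Fin.last (t + 1)))
  left_inv := by
    rintro ⟨⟨hs, ha⟩, a, s⟩
    simp [extendHist]
  right_inv := by
    rintro ⟨hs, ha⟩
    simp [extendHist, Fin.snoc_init_self]

lemma histTake_self {t : ℕ} (h : Hist S A t) : histTake h t le_rfl = h := rfl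

lemma histTake_extend {t : ℕ} (h : Hist S A t) (a : A) (s : S) (i : ℕ)
    (hi : i ≤ t) (hi' : i ≤ t + 1) :
    histTake (extendHist h a s) i hi' = histTake h i hi := by
  refine Prod.ext (funext fun j => ?_) (funext fun j => ?_)
  · show (Fin.snoc h.1 s : Fin (t + 2) → S) ⟨(j : ℕ), _⟩ = h.1 ⟨(j : ℕ), _⟩
    have hj : (j : ℕ) < t + 1 := by have := j.isLt; omega
    rw [show (⟨(j : ℕ), by omega⟩ : Fin (t + 2)) = Fin.castSucc ⟨(j : ℕ), hj⟩ from rfl,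
      Fin.snoc_castSucc]
  · show (Fin.snoc h.2 a : Fin (t + 1) → A) ⟨(j : ℕ), _⟩ = h.2 ⟨(j : ℕ), _⟩
    have hj : (j : ℕ) < t := by have := j.isLt; omega
    rw [show (⟨(j : ℕ), by omega⟩ : Fin (t + 1)) = Fin.castSucc ⟨(j : ℕ), hj⟩ from rfl,
      Fin.snoc_castSucc]

lemma histProb_extend (M : CMP S A) (π : Policy S A) {t : ℕ} (h : Hist S A t) (a : A) (s : S) :
    histProb M π (extendHist h a s)
      = histProb M π h * (π.p t h a * M.P (lastState h) a s) := by
  unfold histProb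
  rw [Fin.prod_univ_castSucc]
  trans (M.μ (h.1 0) *
      ((∏ i : Fin t, (π.p (↑i) (histTake h (↑i) (Nat.le_of_lt i.isLt)) (h.2 i) *
          M.P (h.1 i.castSucc) (h.2 i) (h.1 i.succ))) *
        (π.p t h a * M.P (lastState h) a s)))
  · refine congrArg₂ _ ?_ (congrArg₂ _ (Finset.prod_congr rfl fun i _ => ?_) ?_)
    · show M.μ ((Fin.snoc h.1 s : Fin (t + 2) → S) (Fin.castSucc 0)) = M.μ (h.1 0)
      rw [Fin.snoc_castSucc]
    · show π.p (↑i) (histTake (extendHist h a s) (↑i) (by omega))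
            ((Fin.snoc h.2 a : Fin (t + 1) → A) i.castSucc) *
          M.P ((Fin.snoc h.1 s : Fin (t + 2) → S) i.castSucc.castSucc)
            ((Fin.snoc h.2 a : Fin (t + 1) → A) i.castSucc)
            ((Fin.snoc h.1 s : Fin (t + 2) → S) i.castSucc.succ) = _
      rw [Fin.snoc_castSucc, Fin.snoc_castSucc, Fin.succ_castSucc, Fin.snoc_castSucc,
        histTake_extend h a s (↑i) (Nat.le_of_lt i.isLt) (by omega)]
    · show π.p t (histTake (extendHist h a s) t (by omega))
            ((Fin.snoc h.2 a : Fin (t + 1) → A) (Fin.last t)) *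
          M.P ((Fin.snoc h.1 s : Fin (t + 2) → S) (Fin.castSucc (Fin.last t)))
            ((Fin.snoc h.2 a : Fin (t + 1) → A) (Fin.last t))
            ((Fin.snoc h.1 s : Fin (t + 2) → S) (Fin.succ (Fin.last t))) = _
      rw [Fin.snoc_last, Fin.succ_last, Fin.snoc_last, Fin.snoc_castSucc,
        histTake_extend h a s t le_rfl (by omega), histTake_self]
      rfl
  · ring

lemma histProb_nonneg (M : CMP S A) (π : Policy S A) {t : ℕ} (h : Hist S A t) :
    0 ≤ histProb M π h :=
  mul_nonneg (M.μ_nonneg _) (Finset.prod_nonneg fun i _ =>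
    mul_nonneg (π.nonneg _ _ _) (M.P_nonneg _ _ _))

lemma stateDist_nonneg (M : CMP S A) (π : Policy S A) (t : ℕ) (s : S) :
    0 ≤ stateDist M π t s :=
  Finset.sum_nonneg fun h _ => by
    split
    · exact histProb_nonneg M π h
    · exact le_rfl

/-- State-action occupancy at time `t`. -/
noncomputable def occ (M : CMP S A) (π : Policy S A) (t : ℕ) (s : S) (a : A) : ℝ :=
  ∑ h : Hist S A t, if lastState h = s then histProb M π h * π.p t h a else 0

lemma occ_nonneg (M : CMP S A) (π : Policy S A) (t : ℕ) (s : S) (a : A) :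
    0 ≤ occ M π t s a :=
  Finset.sum_nonneg fun h _ => by
    split
    · exact mul_nonneg (histProb_nonneg M π h) (π.nonneg _ _ _)
    · exact le_rfl

lemma sum_occ (M : CMP S A) (π : Policy S A) (t : ℕ) (s : S) :
    ∑ a, occ M π t s a = stateDist M π t s := by
  unfold occ stateDist
  rw [Finset.sum_comm]
  refine Finset.sum_congr rfl fun h _ => ?_
  split_ifs with hc
  · rw [← Finset.mul_sum, π.sum_one, mul_one]
  · simp

lemma occ_eq_zero (M : CMP S A) (π : Policy S A) (t : ℕ) (s : S) (a : A)
    (hz : stateDist M π t s = 0) : occ M π t s a = 0 := by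
  have h1 : occ M π t s a ≤ ∑ a', occ M π t s a' :=
    Finset.single_le_sum (fun a' _ => occ_nonneg M π t s a') (Finset.mem_univ a)
  rw [sum_occ, hz] at h1
  exact le_antisymm h1 (occ_nonneg M π t s a)

lemma stateDist_succ (M : CMP S A) (π : Policy S A) (t : ℕ) (s' : S) :
    stateDist M π (t + 1) s'
      = ∑ s : S, ∑ a : A, occ M π t s a * M.P s a s' := by
  unfold stateDist
  rw [← Equiv.sum_comp (extendEquiv S A t)
    (fun h => if lastState h = s' then histProb M π h else 0)]
  rw [Fintype.sum_prod_type]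
  have step : ∀ h : Hist S A t,
      (∑ x : A × S, if lastState ((extendEquiv S A t) (h, x)) = s'
          then histProb M π ((extendEquiv S A t) (h, x)) else 0)
        = ∑ a : A, histProb M π h * (π.p t h a * M.P (lastState h) a s') := by
    intro h
    rw [Fintype.sum_prod_type]
    refine Finset.sum_congr rfl fun a _ => ?_
    have : ∀ s : S, ((extendEquiv S A t) (h, a, s)) = extendHist h a s := fun s => rfl
    simp only [this, lastState_extend, histProb_extend]
    simp
  rw [Finset.sum_congr rfl fun h _ => step h]
  symm
  unfold occ
  simp only [Finset.sum_mul, ite_mul, zero_mul]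
  rw [Finset.sum_comm]
  rw [Finset.sum_congr rfl fun a (_ : a ∈ Finset.univ) =>
    (Finset.sum_comm (s := (Finset.univ : Finset S)) (t := Finset.univ)
      (f := fun s h => if lastState h = s then histProb M π h * Policy.p π t h a * M.P s a s' else 0))]
  simp only [Finset.sum_ite_eq, Finset.mem_univ, if_true]
  rw [Finset.sum_comm]
  refine Finset.sum_congr rfl fun h _ => Finset.sum_congr rfl fun a _ => by ring

/-- The Markovianization of `π`: act according to the state-action occupancies of `π`. -/
noncomputable def markovize (M : CMP S A) (π : Policy S A) [Nonempty A] : MPolicy S A where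
  p := fun t s a =>
    if 0 < stateDist M π t s then occ M π t s a / stateDist M π t s
    else (Fintype.card A : ℝ)⁻¹
  nonneg := by
    intro t s a
    split_ifs with hp
    · exact div_nonneg (occ_nonneg M π t s a) hp.le
    · positivity
  sum_one := by
    intro t s
    split_ifs with hp
    · rw [← Finset.sum_div, sum_occ, div_self hp.ne']
    · rw [Finset.sum_const, Finset.card_univ, nsmul_eq_mul,
        mul_inv_cancel₀ (by exact_mod_cast Fintype.card_ne_zero)]

lemma occ_toPolicy (M : CMP S A) (m : MPolicy S A) (t : ℕ) (s : S) (a : A) :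
    occ M m.toPolicy t s a = m.p t s a * stateDist M m.toPolicy t s := by
  unfold occ stateDist
  rw [Finset.mul_sum]
  refine Finset.sum_congr rfl fun h _ => ?_
  split_ifs with hc
  · show histProb M m.toPolicy h * m.p t (lastState h) a = _
    rw [hc]; ring
  · simp

lemma stateDist_zero_eq (M : CMP S A) (π π' : Policy S A) (s : S) :
    stateDist M π 0 s = stateDist M π' 0 s := by
  unfold stateDist histProb
  simp

lemma stateDist_markovize (M : CMP S A) (π : Policy S A) [Nonempty A] (t : ℕ) (s : S) :
    stateDist M (markovize M π).toPolicy t s = stateDist M π t s := by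
  induction t generalizing s with
  | zero => exact stateDist_zero_eq M _ π s
  | succ t ih =>
    rw [stateDist_succ, stateDist_succ]
    refine Finset.sum_congr rfl fun s0 _ => Finset.sum_congr rfl fun a _ => ?_
    congr 1
    rw [occ_toPolicy, ih]
    show (if 0 < stateDist M π t s0 then occ M π t s0 a / stateDist M π t s0
        else (Fintype.card A : ℝ)⁻¹) * stateDist M π t s0 = occ M π t s0 a
    split_ifs with hp
    · exact div_mul_cancel₀ _ hp.ne'
    · have hz : stateDist M π t s0 = 0 :=
        le_antisymm (not_lt.mp hp) (stateDist_nonneg M π t s0)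
      rw [hz, mul_zero, occ_eq_zero M π t s0 a hz]

end Aux

/-- the set of stationary state distributions induced by non-Markovian
policies equals the set induced by Markovian policies. -/
theorem stationary_state_distributions_eq
    {S A : Type} [Fintype S] [Fintype A] [Nonempty S] [Nonempty A] [DecidableEq S]
    (M : CMP S A) (d : S → ℝ) (hd0 : ∀ s, 0 ≤ d s) (hd1 : ∑ s, d s = 1) :
    (∃ π : Policy S A, ∀ s : S,
        Filter.Tendsto (fun t => stateDist M π t s) Filter.atTop (nhds (d s)))
    ↔ (∃ π' : MPolicy S A, ∀ s : S,
        Filter.Tendsto (fun t => stateDist M π'.toPolicy t s) Filter.atTop (nhds (d s))) := by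
  constructor
  · rintro ⟨π, hπ⟩
    exact ⟨markovize M π, fun s =>
      (hπ s).congr fun t => (stateDist_markovize M π t s).symm⟩
  · rintro ⟨π', hπ'⟩
    exact ⟨π'.toPolicy, hπ'⟩
end

section
/- For every controlled Markov process, every horizon T ≥ 1, every t < T, and every prefix trajectory h_t of length t with positive probability, there exists a deterministic non-Markovian policy π_NM such that the expected entropy of the completed trajectory from h_t under π_NM attains the supremum over all (possibly randomized, history-dependent) policies: E_{h'∼p_{T−t}^{π_NM}}[H(d_{h_t ⊕ h'})] = sup_{π ∈ Π} E_{h'∼p_{T−t}^{π}}[H(d_{h_t ⊕ h'})]; in particular the supremum is attained. -/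
open scoped BigOperators

section AuxDerandomize

variable {S A : Type} [Fintype S] [Fintype A] [Nonempty S] [Nonempty A]
    [DecidableEq S] [DecidableEq A]

lemma mix_prod {ι B : Type*} [Fintype ι] [DecidableEq ι] [Fintype B] [DecidableEq B]
    (p : ι → B → ℝ) (hp : ∀ n, ∑ a, p n a = 1)
    {k : ℕ} (node : Fin k → ι) (hinj : Function.Injective node)
    (act : Fin k → B) :
    ∑ g : ι → B, (∏ n, p n (g n)) * ∏ i, (if act i = g (node i) then (1:ℝ) else 0)
      = ∏ i, p (node i) (act i) := by
  classical
  set w : ι → B → ℝ := fun n a => ∏ i : Fin k, (if node i = n then (if act i = a then (1:ℝ) else 0) else 1) with hw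
  have hgw : ∀ g : ι → B, ∏ i, (if act i = g (node i) then (1:ℝ) else 0) = ∏ n, w n (g n) := by
    intro g
    rw [hw]
    simp only
    rw [Finset.prod_comm]
    refine Finset.prod_congr rfl ?_
    intro i _
    rw [Finset.prod_eq_single (node i)]
    · simp
    · intro n _ hne; rw [if_neg (by exact fun h => hne h.symm)]
    · intro hn; exact absurd (Finset.mem_univ _) hn
  have step1 : ∑ g : ι → B, (∏ n, p n (g n)) * ∏ i, (if act i = g (node i) then (1:ℝ) else 0)
      = ∑ g : ι → B, ∏ n, (p n (g n) * w n (g n)) := by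
    refine Finset.sum_congr rfl fun g _ => ?_
    rw [hgw g, ← Finset.prod_mul_distrib]
  rw [step1]
  have step2 : ∑ g : ι → B, ∏ n, (p n (g n) * w n (g n)) = ∏ n, ∑ a, p n a * w n a := by
    rw [Finset.prod_univ_sum]
    rw [← Fintype.piFinset_univ]
  rw [step2]
  have key : ∀ n, (∑ a, p n a * w n a) = ∏ i, (if node i = n then p n (act i) else 1) := by
    intro n
    by_cases hn : ∃ i, node i = n
    · obtain ⟨i₀, rfl⟩ := hn
      have hwv : ∀ a, w (node i₀) a = if act i₀ = a then (1:ℝ) else 0 := by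
        intro a
        rw [hw]
        simp only
        rw [Finset.prod_eq_single i₀]
        · simp
        · intro i _ hne; rw [if_neg (fun h => hne (hinj h))]
        · intro hn; exact absurd (Finset.mem_univ _) hn
      rw [Finset.prod_eq_single i₀]
      · simp only [if_pos rfl]
        simp only [hwv]
        rw [Finset.sum_eq_single (act i₀)]
        · simp
        · intro a _ hne; rw [if_neg (fun h => hne h.symm), mul_zero]
        · intro hn; exact absurd (Finset.mem_univ _) hn
      · intro i _ hne; rw [if_neg (fun h => hne (hinj h))]
      · intro hn; exact absurd (Finset.mem_univ _) hn
    · push_neg at hn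
      have hwv : ∀ a, w n a = 1 := by
        intro a; rw [hw]; simp only
        exact Finset.prod_eq_one fun i _ => if_neg (hn i)
      simp only [hwv, mul_one, hp n]
      exact (Finset.prod_eq_one fun i _ => if_neg (hn i)).symm
  simp only [key]
  rw [Finset.prod_comm]
  refine Finset.prod_congr rfl fun i _ => ?_
  rw [Finset.prod_eq_single (node i)]
  · simp
  · intro n _ hne; rw [if_neg (fun h => hne h.symm)]
  · intro hn; exact absurd (Finset.mem_univ _) hn

/-- Extend a finitely-supported decision rule (on histories of lengths `t, …, t+k-1`)
to a full deterministic non-Markovian decision rule. -/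
noncomputable def extF (t k : ℕ) (g : ((i : Fin k) × Hist S A (t + (i : ℕ))) → A) :
    ∀ t' : ℕ, Hist S A t' → A := fun t' h' =>
  if hc : t ≤ t' ∧ t' - t < k then
    g ⟨⟨t' - t, hc.2⟩, cast (congrArg (Hist S A) (by simp only [Fin.val_mk]; omega)) h'⟩
  else Classical.arbitrary A

lemma extF_apply (t k : ℕ) (g : ((i : Fin k) × Hist S A (t + (i : ℕ))) → A)
    (i : Fin k) (H : Hist S A (t + (i : ℕ))) :
    extF t k g (t + (i : ℕ)) H = g ⟨i, H⟩ := by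
  have hc : t ≤ t + (i : ℕ) ∧ t + (i : ℕ) - t < k := ⟨Nat.le_add_right _ _, by have := i.isLt; omega⟩
  rw [extF, dif_pos hc]
  congr 1
  refine Sigma.ext (Fin.ext (by simp)) ?_
  exact cast_heq _ _

lemma contProb_mix (M : CMP S A) (π : Policy S A) {t k : ℕ} (h : Hist S A t)
    (c : Contin S A k) :
    ∑ g : ((i : Fin k) × Hist S A (t + (i : ℕ))) → A,
      (∏ n : ((i : Fin k) × Hist S A (t + (i : ℕ))), π.p (t + (n.1 : ℕ)) n.2 (g n)) *
        contProb M (detPolicy (extF t k g)) h c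
      = contProb M π h c := by
  classical
  set node : Fin k → ((i : Fin k) × Hist S A (t + (i : ℕ))) := fun i =>
    ⟨i, histTake (histAppend h c) (t + (i : ℕ)) (by have := i.isLt; omega)⟩ with hnode
  have hinj : Function.Injective node := by
    intro i j hij
    rw [hnode] at hij
    exact congrArg Sigma.fst hij
  set act : Fin k → A := fun i => (histAppend h c).2 ⟨t + (i : ℕ), by have := i.isLt; omega⟩ with hact
  set q : Fin k → ℝ := fun i =>
    M.P ((histAppend h c).1 ⟨t + (i : ℕ), by have := i.isLt; omega⟩)
      ((histAppend h c).2 ⟨t + (i : ℕ), by have := i.isLt; omega⟩)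
      ((histAppend h c).1 ⟨t + (i : ℕ) + 1, by have := i.isLt; omega⟩) with hq
  have hdet : ∀ g, contProb M (detPolicy (extF t k g)) h c
      = (∏ i, (if act i = g (node i) then (1:ℝ) else 0)) * ∏ i, q i := by
    intro g
    rw [contProb, ← Finset.prod_mul_distrib]
    refine Finset.prod_congr rfl fun i _ => ?_
    congr 1
    show (if act i = extF t k g (t + (i : ℕ)) _ then (1:ℝ) else 0) = _
    rw [extF_apply]
  have hπ : contProb M π h c = (∏ i, π.p (t + ((node i).1 : ℕ)) (node i).2 (act i)) * ∏ i, q i := by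
    rw [contProb, ← Finset.prod_mul_distrib]
  simp only [hdet]
  rw [hπ]
  have := mix_prod (fun (n : (i : Fin k) × Hist S A (t + (i : ℕ))) (a : A) => π.p (t + (n.1 : ℕ)) n.2 a)
    (fun n => π.sum_one _ _) node hinj act
  calc ∑ g : ((i : Fin k) × Hist S A (t + (i : ℕ))) → A,
        (∏ n, π.p (t + (n.1 : ℕ)) n.2 (g n)) * ((∏ i, (if act i = g (node i) then (1:ℝ) else 0)) * ∏ i, q i)
      = (∑ g : ((i : Fin k) × Hist S A (t + (i : ℕ))) → A,
        (∏ n, π.p (t + (n.1 : ℕ)) n.2 (g n)) * ∏ i, (if act i = g (node i) then (1:ℝ) else 0)) * ∏ i, q i := by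
        rw [Finset.sum_mul]; exact Finset.sum_congr rfl fun g _ => by ring
    _ = _ := by rw [this]

end AuxDerandomize

/-- for every CMP, horizon `T ≥ 1`, time `t < T`, and prefix trajectory
`h_t` of length `t` (with `t+1` states, hence `T - 1 - t` remaining steps to complete a
length-`T` trajectory) with positive probability, there is a deterministic
non-Markovian policy whose expected completed-trajectory entropy attains the supremum
over all (possibly randomized, history-dependent) policies. -/
theorem deterministic_policy_attains_sup_expected_entropy_from_prefix
    {S A : Type} [Fintype S] [Fintype A] [Nonempty S] [Nonempty A]
    [DecidableEq S] [DecidableEq A]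
    (M : CMP S A) (T t : ℕ) (hT : 1 ≤ T) (ht : t < T)
    (h : Hist S A t) (hpos : Reachable M h) :
    ∃ f : ∀ t' : ℕ, Hist S A t' → A,
      expEntFrom M (detPolicy f) (T - 1 - t) h
        = ⨆ π : Policy S A, expEntFrom M π (T - 1 - t) h := by
  classical
  set k := T - 1 - t with hk
  -- mixture decomposition of the expected entropy
  have hmixE : ∀ π : Policy S A,
      expEntFrom M π k h
        = ∑ g : ((i : Fin k) × Hist S A (t + (i : ℕ))) → A,
            (∏ n : ((i : Fin k) × Hist S A (t + (i : ℕ))), π.p (t + (n.1 : ℕ)) n.2 (g n)) *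
              expEntFrom M (detPolicy (extF t k g)) k h := by
    intro π
    rw [expEntFrom]
    simp only [expEntFrom, Finset.mul_sum]
    rw [Finset.sum_comm]
    refine Finset.sum_congr rfl fun c _ => ?_
    rw [← contProb_mix M π h c, Finset.sum_mul]
    exact Finset.sum_congr rfl fun g _ => by ring
  have hlamnn : ∀ (π : Policy S A) (g : ((i : Fin k) × Hist S A (t + (i : ℕ))) → A),
      0 ≤ ∏ n : ((i : Fin k) × Hist S A (t + (i : ℕ))), π.p (t + (n.1 : ℕ)) n.2 (g n) :=
    fun π g => Finset.prod_nonneg fun n _ => π.nonneg _ _ _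
  have hlamsum : ∀ π : Policy S A,
      ∑ g : ((i : Fin k) × Hist S A (t + (i : ℕ))) → A,
        ∏ n : ((i : Fin k) × Hist S A (t + (i : ℕ))), π.p (t + (n.1 : ℕ)) n.2 (g n) = 1 := by
    intro π
    rw [← Fintype.piFinset_univ, ← Finset.prod_univ_sum]
    simp [π.sum_one]
  -- a maximizing finite decision rule
  obtain ⟨g₀, -, hg₀⟩ := Finset.exists_max_image (Finset.univ : Finset (((i : Fin k) × Hist S A (t + (i : ℕ))) → A))
    (fun g => expEntFrom M (detPolicy (extF t k g)) k h) ⟨Classical.arbitrary _, Finset.mem_univ _⟩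
  have hle : ∀ π : Policy S A, expEntFrom M π k h ≤ expEntFrom M (detPolicy (extF t k g₀)) k h := by
    intro π
    rw [hmixE π]
    calc ∑ g : ((i : Fin k) × Hist S A (t + (i : ℕ))) → A,
          (∏ n : ((i : Fin k) × Hist S A (t + (i : ℕ))), π.p (t + (n.1 : ℕ)) n.2 (g n)) *
            expEntFrom M (detPolicy (extF t k g)) k h
        ≤ ∑ g : ((i : Fin k) × Hist S A (t + (i : ℕ))) → A,
          (∏ n : ((i : Fin k) × Hist S A (t + (i : ℕ))), π.p (t + (n.1 : ℕ)) n.2 (g n)) *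
            expEntFrom M (detPolicy (extF t k g₀)) k h :=
          Finset.sum_le_sum fun g _ =>
            mul_le_mul_of_nonneg_left (hg₀ g (Finset.mem_univ g)) (hlamnn π g)
      _ = expEntFrom M (detPolicy (extF t k g₀)) k h := by
          rw [← Finset.sum_mul, hlamsum π, one_mul]
  refine ⟨extF t k g₀, ?_⟩
  haveI : Nonempty (Policy S A) := ⟨detPolicy (extF t k g₀)⟩
  have hbdd : BddAbove (Set.range fun π : Policy S A => expEntFrom M π k h) := by
    refine ⟨expEntFrom M (detPolicy (extF t k g₀)) k h, ?_⟩
    rintro x ⟨π, rfl⟩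
    exact hle π
  exact le_antisymm (le_ciSup hbdd (detPolicy (extF t k g₀))) (ciSup_le hle)
end
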